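/- Every finite connected simple graph G with 2 ≤ χ(G) ≤ 3 has a spanning tree T such that BBC_2(G,T) = χ(G) + 1, and every spanning tree T' of G satisfies BBC_2(G,T') ≥ χ(G) + 1. -/

import Mathlib

/-- A proper `k`-coloring of `G`: colors are taken in `{1, …, k}` and adjacent
vertices receive different colors. -/
def IsProperColoring {V : Type*} (G : SimpleGraph V) (k : ℕ) (c : V → ℕ) : Prop :=
  (∀ v : V, 1 ≤ c v ∧ c v ≤ k) ∧ ∀ ⦃u v : V⦄, G.Adj u v → c u ≠ c v

/-- The chromatic number of `G`: the least `k` such that `G` has a proper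
`k`-coloring. -/
noncomputable def chromNum {V : Type*} (G : SimpleGraph V) : ℕ :=
  sInf {k : ℕ | ∃ c : V → ℕ, IsProperColoring G k c}

/-- A `q`-backbone `k`-coloring of `(G, H)`: a proper `k`-coloring of `G` such
that the colors of the endpoints of every edge of `H` differ by at least `q`. -/
def IsBackboneColoring {V : Type*} (G H : SimpleGraph V) (q k : ℕ) (c : V → ℕ) : Prop :=
  IsProperColoring G k c ∧ ∀ ⦃u v : V⦄, H.Adj u v → (q : ℤ) ≤ |(c u : ℤ) - (c v : ℤ)|

/-- The `q`-backbone chromatic number `BBC_q(G, H)`: the least `k` for which a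
`q`-backbone `k`-coloring of `(G, H)` exists. -/
noncomputable def BBC {V : Type*} (G H : SimpleGraph V) (q : ℕ) : ℕ :=
  sInf {k : ℕ | ∃ c : V → ℕ, IsBackboneColoring G H q k c}

open SimpleGraph

section Aux
variable {V : Type*}

/-- Restriction of `G` to a set `s` of vertices, as a graph on the same vertex type. -/
def rg (G : SimpleGraph V) (s : Set V) : SimpleGraph V where
  Adj a b := G.Adj a b ∧ a ∈ s ∧ b ∈ s
  symm := ⟨fun _ _ ⟨h, ha, hb⟩ => ⟨h.symm, hb, ha⟩⟩
  loopless := ⟨fun a ⟨h, _, _⟩ => G.loopless.irrefl a h⟩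

/-- The "good" graph of a coloring: edges of `G` whose endpoints receive colors
at distance at least 2. -/
def goodG (G : SimpleGraph V) (c : V → ℕ) : SimpleGraph V where
  Adj a b := G.Adj a b ∧ (2 : ℤ) ≤ |(c a : ℤ) - (c b : ℤ)|
  symm := ⟨fun _ _ ⟨h, hd⟩ => ⟨h.symm, by rwa [abs_sub_comm]⟩⟩
  loopless := ⟨fun a ⟨h, _⟩ => G.loopless.irrefl a h⟩

@[simp] lemma rg_adj {G : SimpleGraph V} {s : Set V} {a b : V} :
    (rg G s).Adj a b ↔ G.Adj a b ∧ a ∈ s ∧ b ∈ s := Iff.rfl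

@[simp] lemma goodG_adj {G : SimpleGraph V} {c : V → ℕ} {a b : V} :
    (goodG G c).Adj a b ↔ G.Adj a b ∧ (2 : ℤ) ≤ |(c a : ℤ) - (c b : ℤ)| := Iff.rfl

lemma goodG_le (G : SimpleGraph V) (c : V → ℕ) : goodG G c ≤ G := fun _ _ h => h.1

lemma reach_rg_of_support {G : SimpleGraph V} {s t : Set V} :
    ∀ {x y : V} (p : (rg G s).Walk x y), (∀ z ∈ p.support, z ∈ t) →
      (rg G t).Reachable x y := by
  intro x y p
  induction p with
  | nil => intro _; exact Reachable.refl _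
  | cons h p ih =>
    intro hsupp
    refine (Adj.reachable ?_).trans (ih ?_)
    · exact ⟨h.1, hsupp _ (Walk.start_mem_support _), hsupp _ (by simp)⟩
    · intro z hz
      exact hsupp z (by simp [hz])

lemma reach_of_mem_support {H : SimpleGraph V} {x y : V} (p : H.Walk x y)
    {z : V} (hz : z ∈ p.support) : H.Reachable x z := by
  classical
  exact ⟨p.takeUntil z hz⟩

lemma exists_frontier {G : SimpleGraph V} {s : Set V} :
    ∀ {u v : V} (p : (rg G s).Walk u v), u ≠ v →
      ∃ w, (rg G s).Adj w v ∧ (rg G (s \ {v})).Reachable u w := by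
  intro u v p
  induction p with
  | nil => intro h; exact absurd rfl h
  | @cons a b c h p ih =>
    intro hac
    by_cases hbc : b = c
    · subst hbc
      exact ⟨a, h, Reachable.refl _⟩
    · obtain ⟨w, hw1, hw2⟩ := ih hbc
      refine ⟨w, hw1, (Adj.reachable ?_).trans hw2⟩
      exact ⟨h.1, ⟨h.2.1, hac⟩, ⟨h.2.2, hbc⟩⟩

lemma walk_support_mem {G : SimpleGraph V} {s : Set V} :
    ∀ {a b : V} (p : (rg G s).Walk a b), a ∈ s → ∀ z ∈ p.support, z ∈ s := by
  intro a b p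
  induction p with
  | nil => intro ha z hz; rw [Walk.mem_support_nil_iff] at hz; exact hz ▸ ha
  | cons h p ih =>
    intro ha z hz
    rw [Walk.support_cons, List.mem_cons] at hz
    rcases hz with rfl | hz
    · exact ha
    · exact ih h.2.2 z hz

end Aux

section ST
variable {V : Type*} [Fintype V]

lemma exists_spanning_tree_aux :
    ∀ (n : ℕ) (G : SimpleGraph V), G.edgeSet.ncard ≤ n → G.Connected →
      ∃ T, T ≤ G ∧ T.IsTree := by
  intro n
  induction n with
  | zero =>
    intro G hcard hconn
    refine ⟨G, le_refl G, hconn, ?_⟩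
    intro v c hc
    have hes : G.edgeSet = ∅ :=
      (Set.ncard_eq_zero (Set.toFinite G.edgeSet)).mp (Nat.le_zero.mp hcard)
    cases c with
    | nil => exact hc.ne_nil rfl
    | cons h p =>
      have : s(v, _) ∈ G.edgeSet := h
      rw [hes] at this
      exact this.elim
  | succ n ih =>
    intro G hcard hconn
    by_cases hac : G.IsAcyclic
    · exact ⟨G, le_refl G, hconn, hac⟩
    · rw [isAcyclic_iff_forall_adj_isBridge] at hac
      push_neg at hac
      obtain ⟨v, w, hvw, hnb⟩ := hac
      rw [isBridge_iff] at hnb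
      have hreach : (G \ fromEdgeSet {s(v, w)}).Reachable v w := by
        by_contra hn
        exact hnb hn
      set G' := G \ fromEdgeSet {s(v, w)} with hG'
      have hle : G' ≤ G := sdiff_le
      have step : ∀ {a b : V}, G.Adj a b → G'.Reachable a b := by
        intro a b hab
        by_cases he : s(a, b) = s(v, w)
        · rcases Sym2.eq_iff.mp he with ⟨rfl, rfl⟩ | ⟨rfl, rfl⟩
          · exact hreach
          · exact hreach.symm
        · refine Adj.reachable ?_
          rw [hG', sdiff_adj]
          refine ⟨hab, ?_⟩
          rw [fromEdgeSet_adj]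
          rintro ⟨hmem, -⟩
          exact he (Set.mem_singleton_iff.mp hmem)
      have hconn' : G'.Connected := by
        haveI := hconn.nonempty
        refine ⟨?_⟩
        intro a b
        obtain ⟨p⟩ := hconn.preconnected a b
        induction p with
        | nil => exact Reachable.refl _
        | cons h p ihp => exact (step h).trans ihp
      have hedge : G'.edgeSet = G.edgeSet \ {s(v, w)} := by
        rw [hG', edgeSet_sdiff, edgeSet_fromEdgeSet, edgeSet_sdiff_sdiff_isDiag]
      have hcard' : G'.edgeSet.ncard ≤ n := by
        have hlt : (G.edgeSet \ {s(v, w)}).ncard < G.edgeSet.ncard :=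
          Set.ncard_diff_singleton_lt_of_mem hvw (Set.toFinite _)
        rw [hedge]
        omega
      obtain ⟨T, hT1, hT2⟩ := ih G' hcard' hconn'
      exact ⟨T, le_trans hT1 hle, hT2⟩

lemma exists_spanning_tree (G : SimpleGraph V) (hconn : G.Connected) :
    ∃ T, T ≤ G ∧ T.IsTree :=
  exists_spanning_tree_aux G.edgeSet.ncard G (le_refl _) hconn

end ST
section Key
variable {V : Type*} [Fintype V]

lemma keyLemma (G : SimpleGraph V) :
    ∀ (n : ℕ) (s : Set V) (f : V → ℕ),
      s.ncard ≤ n → s.Nonempty →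
      (∀ x ∈ s, ∀ y ∈ s, (rg G s).Reachable x y) →
      (∀ x ∈ s, f x = 1 ∨ f x = 2 ∨ f x = 3) →
      (∀ x y : V, (rg G s).Adj x y → f x ≠ f y) →
      ∃ c : V → ℕ,
        (∀ x ∈ s, c x = 1 ∨ c x = 2 ∨ c x = 3 ∨ c x = 4) ∧
        (∀ x ∈ s, f x ≠ 3 → c x = 1 ∨ c x = 4) ∧
        (∀ x y : V, (rg G s).Adj x y → c x ≠ c y) ∧
        (∀ x ∈ s, ∀ y ∈ s, (rg (goodG G c) s).Reachable x y) := by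
  intro n
  induction n with
  | zero =>
    intro s f hcard hne _ _ _
    exfalso
    rw [Nat.le_zero] at hcard
    rw [Set.ncard_eq_zero (Set.toFinite s)] at hcard
    exact Set.not_nonempty_empty (hcard ▸ hne)
  | succ n ih =>
    intro s f hcard hne hconn hf hfp
    by_cases h3 : ∃ v ∈ s, f v = 3
    · -- main case : there is a vertex of color 3
      obtain ⟨v, hvs, hfv⟩ := h3
      set s' : Set V := s \ {v} with hs'def
      set t : V → Set V := fun u => {x | (rg G s').Reachable u x} with htdef
      have ht_self : ∀ u : V, u ∈ t u := fun u => Reachable.refl u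
      have ht_sub : ∀ u ∈ s', t u ⊆ s' := by
        intro u hu x hx
        obtain ⟨p⟩ := (hx : (rg G s').Reachable u x)
        exact walk_support_mem p hu x (Walk.end_mem_support _)
      have hteq : ∀ u x : V, (rg G s').Reachable u x → t x = t u := by
        intro u x hux
        ext z
        constructor
        · intro hz; exact hux.trans hz
        · intro hz; exact hux.symm.trans hz
      have htconn : ∀ u : V, ∀ x ∈ t u, ∀ y ∈ t u,
          (rg G (t u)).Reachable x y := by
        intro u x hx y hy
        have sub : ∀ z ∈ t u, (rg G (t u)).Reachable u z := by
          intro z hz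
          obtain ⟨p⟩ := (hz : (rg G s').Reachable u z)
          refine reach_rg_of_support p ?_
          intro z' hz'
          exact reach_of_mem_support p hz'
        exact (sub x hx).symm.trans (sub y hy)
      have hfront : ∀ u ∈ s', ∃ w, G.Adj w v ∧ w ∈ t u ∧ f w ≠ 3 := by
        intro u hu
        obtain ⟨p⟩ := hconn u hu.1 v hvs
        obtain ⟨w, hw1, hw2⟩ := exists_frontier p hu.2
        refine ⟨w, hw1.1, hw2, ?_⟩
        intro hfw
        exact hfp w v hw1 (hfw.trans hfv.symm)
      -- property of per-component colorings
      set P : Set V → (V → ℕ) → Prop := fun T c =>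
        (∀ x ∈ T, c x = 1 ∨ c x = 2 ∨ c x = 3 ∨ c x = 4) ∧
        (∀ x ∈ T, f x ≠ 3 → c x = 1 ∨ c x = 4) ∧
        (∀ x y : V, (rg G T).Adj x y → c x ≠ c y) ∧
        (∀ x ∈ T, ∀ y ∈ T, (rg (goodG G c) T).Reachable x y) ∧
        (∃ w ∈ T, G.Adj w v ∧ c w = 1) with hPdef
      have hPex : ∀ u ∈ s', ∃ c, P (t u) c := by
        intro u hu
        have hsub' : t u ⊆ s' := ht_sub u hu
        have hsub : t u ⊆ s := fun x hx => (hsub' hx).1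
        have h1 : (t u).ncard ≤ n := by
          have e1 : (t u).ncard ≤ s'.ncard :=
            Set.ncard_le_ncard hsub' (Set.toFinite _)
          have e2 : s'.ncard < s.ncard :=
            Set.ncard_diff_singleton_lt_of_mem hvs (Set.toFinite _)
          omega
        obtain ⟨c0, hc1, hc2, hc3, hc4⟩ :=
          ih (t u) f h1 ⟨u, ht_self u⟩ (htconn u)
            (fun x hx => hf x (hsub hx))
            (fun x y hxy => hfp x y ⟨hxy.1, hsub hxy.2.1, hsub hxy.2.2⟩)
        obtain ⟨w, hwv, hwt, hfw⟩ := hfront u hu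
        rcases hc2 w hwt hfw with hcw | hcw
        · exact ⟨c0, hc1, hc2, hc3, hc4, w, hwt, hwv, hcw⟩
        · -- flip the coloring
          refine ⟨fun x => 5 - c0 x, ?_, ?_, ?_, ?_, ?_⟩
          · intro x hx
            rcases hc1 x hx with h | h | h | h <;> simp [h]
          · intro x hx hfx
            rcases hc2 x hx hfx with h | h <;> simp [h]
          · intro x y hxy
            have h1 := hc1 x hxy.2.1
            have h2 := hc1 y hxy.2.2
            have h3 := hc3 x y hxy
            show 5 - c0 x ≠ 5 - c0 y
            omega
          · have hle : rg (goodG G c0) (t u) ≤ rg (goodG G (fun x => 5 - c0 x)) (t u) := by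
              intro a b hab
              refine ⟨⟨hab.1.1, ?_⟩, hab.2.1, hab.2.2⟩
              have ha4 : c0 a ≤ 4 := by rcases hc1 a hab.2.1 with h | h | h | h <;> omega
              have hb4 : c0 b ≤ 4 := by rcases hc1 b hab.2.2 with h | h | h | h <;> omega
              have e1 : ((5 - c0 a : ℕ) : ℤ) = 5 - (c0 a : ℤ) := by
                have := Nat.cast_sub (le_trans ha4 (by norm_num)) (R := ℤ) (m := c0 a) (n := 5)
                exact_mod_cast this
              have e2 : ((5 - c0 b : ℕ) : ℤ) = 5 - (c0 b : ℤ) := by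
                have := Nat.cast_sub (le_trans hb4 (by norm_num)) (R := ℤ) (m := c0 b) (n := 5)
                exact_mod_cast this
              rw [e1, e2]
              have : (5 - (c0 a : ℤ)) - (5 - (c0 b : ℤ)) = -((c0 a : ℤ) - (c0 b : ℤ)) := by ring
              rw [this, abs_neg]
              exact hab.1.2
            intro x hx y hy
            exact (hc4 x hx y hy).mono hle
          · exact ⟨w, hwt, hwv, by simp [hcw]⟩
      -- choose colorings per component
      classical
      set g : Set V → (V → ℕ) := fun T =>
        if h : ∃ c, P T c then h.choose else fun _ => 1 with hgdef
      have hg : ∀ u ∈ s', P (t u) (g (t u)) := by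
        intro u hu
        have h := hPex u hu
        simp only [hgdef, dif_pos h]
        exact h.choose_spec
      set c : V → ℕ := fun x => if x = v then 3 else g (t x) x with hcdef
      have hagree : ∀ u ∈ s', ∀ x ∈ t u, c x = g (t u) x := by
        intro u hu x hx
        have hxs' : x ∈ s' := ht_sub u hu hx
        have hxv : x ≠ v := fun h => hxs'.2 (by simp [h])
        have : t x = t u := hteq u x hx
        simp only [hcdef, this]
        rw [if_neg hxv]
      have hcv : c v = 3 := by simp [hcdef]
      have hmem_s' : ∀ x ∈ s, x ≠ v → x ∈ s' := fun x hx hxv => ⟨hx, hxv⟩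
      refine ⟨c, ?_, ?_, ?_, ?_⟩
      · intro x hx
        by_cases hxv : x = v
        · subst hxv; rw [hcv]; tauto
        · have hx' := hmem_s' x hx hxv
          have := (hg x hx').1 x (ht_self x)
          rwa [hagree x hx' x (ht_self x)]
      · intro x hx hfx
        by_cases hxv : x = v
        · exact absurd (hxv ▸ hfv) hfx
        · have hx' := hmem_s' x hx hxv
          have := (hg x hx').2.1 x (ht_self x) hfx
          rwa [hagree x hx' x (ht_self x)]
      · intro x y hxy
        by_cases hxv : x = v
        · have hyv : y ≠ v := by
            intro h
            rw [hxv, h] at hxy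
            exact G.loopless.irrefl v hxy.1
          have hy' := hmem_s' y hxy.2.2 hyv
          have hfy : f y ≠ 3 := fun h => hfp x y hxy (by rw [hxv, hfv, h])
          have := (hg y hy').2.1 y (ht_self y) hfy
          have hcx : c x = 3 := by simp only [hcdef]; rw [if_pos hxv]
          rw [hagree y hy' y (ht_self y), hcx]
          omega
        · by_cases hyv : y = v
          · have hx' := hmem_s' x hxy.2.1 hxv
            have hfx : f x ≠ 3 := fun h => hfp x y hxy (by rw [hyv, hfv, h])
            have := (hg x hx').2.1 x (ht_self x) hfx
            have hcy : c y = 3 := by simp only [hcdef]; rw [if_pos hyv]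
            rw [hagree x hx' x (ht_self x), hcy]
            omega
          · have hx' := hmem_s' x hxy.2.1 hxv
            have hy' := hmem_s' y hxy.2.2 hyv
            have hyt : y ∈ t x := Adj.reachable ⟨hxy.1, hx', hy'⟩
            have hprop := (hg x hx').2.2.1 x y ⟨hxy.1, ht_self x, hyt⟩
            rwa [hagree x hx' x (ht_self x), hagree x hx' y hyt]
      · -- connectivity
        have haux : ∀ x ∈ s, (rg (goodG G c) s).Reachable x v := by
          intro x hx
          by_cases hxv : x = v
          · exact hxv ▸ Reachable.refl _
          · have hx' := hmem_s' x hx hxv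
            obtain ⟨w, hwt, hwv, hcw⟩ := (hg x hx').2.2.2.2
            have hreach := (hg x hx').2.2.2.1 x (ht_self x) w hwt
            have hle : rg (goodG G (g (t x))) (t x) ≤ rg (goodG G c) s := by
              intro a b hab
              have ha : a ∈ t x := hab.2.1
              have hb : b ∈ t x := hab.2.2
              refine ⟨⟨hab.1.1, ?_⟩, (ht_sub x hx' ha).1, (ht_sub x hx' hb).1⟩
              rw [hagree x hx' a ha, hagree x hx' b hb]
              exact hab.1.2
            have h1 : (rg (goodG G c) s).Reachable x w := hreach.mono hle
            refine h1.trans (Adj.reachable ?_)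
            refine ⟨⟨hwv, ?_⟩, (ht_sub x hx' hwt).1, hvs⟩
            rw [hagree x hx' w hwt, hcw, hcv]
            norm_num
        intro x hx y hy
        exact (haux x hx).trans (haux y hy).symm
    · -- bipartite case: no vertex of color 3
      push_neg at h3
      set c : V → ℕ := fun x => if f x = 1 then 1 else 4 with hcdef
      have hprop : ∀ x y : V, (rg G s).Adj x y → c x ≠ c y := by
        intro x y hxy
        have hfx := hf x hxy.2.1
        have hfy := hf y hxy.2.2
        have h3x := h3 x hxy.2.1
        have h3y := h3 y hxy.2.2
        have hne' := hfp x y hxy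
        simp only [hcdef]
        by_cases h1 : f x = 1
        · rw [if_pos h1, if_neg (fun h => hne' (h1.trans h.symm))]; norm_num
        · rw [if_neg h1, if_pos (by omega : f y = 1)]; norm_num
      refine ⟨c, ?_, ?_, hprop, ?_⟩
      · intro x hx; by_cases h1 : f x = 1 <;> simp [hcdef, h1]
      · intro x hx _; by_cases h1 : f x = 1 <;> simp [hcdef, h1]
      · have hle : rg G s ≤ rg (goodG G c) s := by
          intro a b hab
          refine ⟨⟨hab.1, ?_⟩, hab.2.1, hab.2.2⟩
          have := hprop a b hab
          have hca : c a = 1 ∨ c a = 4 := by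
            simp only [hcdef]; by_cases h1 : f a = 1 <;> simp [h1]
          have hcb : c b = 1 ∨ c b = 4 := by
            simp only [hcdef]; by_cases h1 : f b = 1 <;> simp [h1]
          rcases hca with h | h <;> rcases hcb with h' | h' <;>
            rw [h, h'] <;> norm_num
          · exact absurd (h.trans h'.symm) this
          · exact absurd (h.trans h'.symm) this
        intro x hx y hy
        exact (hconn x hx y hy).mono hle
end Key

section Main
variable {V : Type*} [Fintype V]

lemma exists_proper_card (G : SimpleGraph V) [Nonempty V] :
    ∃ c : V → ℕ, IsProperColoring G (Fintype.card V) c := by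
  refine ⟨fun v => (Fintype.equivFin V v).val + 1, ?_, ?_⟩
  · intro v
    have := (Fintype.equivFin V v).isLt
    dsimp only
    omega
  · intro u v huv heq
    dsimp only at heq
    have : (Fintype.equivFin V u) = (Fintype.equivFin V v) := by
      apply Fin.ext
      omega
    exact huv.ne ((Fintype.equivFin V).injective this)

lemma exists_backbone_coloring (G H : SimpleGraph V) [Nonempty V] :
    ∃ c : V → ℕ, IsBackboneColoring G H 2 (2 * Fintype.card V) c := by
  refine ⟨fun v => 2 * (Fintype.equivFin V v).val + 1, ⟨?_, ?_⟩, ?_⟩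
  · intro v
    have h1 : (0:ℕ) < Fintype.card V := Fintype.card_pos
    have h2 := (Fintype.equivFin V v).isLt
    dsimp only
    omega
  · intro u v huv heq
    dsimp only at heq
    have : (Fintype.equivFin V u) = (Fintype.equivFin V v) := by
      apply Fin.ext
      omega
    exact huv.ne ((Fintype.equivFin V).injective this)
  · intro u v huv
    have hne : (Fintype.equivFin V u).val ≠ (Fintype.equivFin V v).val := by
      intro h
      exact huv.ne ((Fintype.equivFin V).injective (Fin.ext h))
    dsimp only
    rw [le_abs]
    push_cast
    omega

lemma bbc_lower (G : SimpleGraph V) (hG : G.Connected)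
    (hchi : 2 ≤ chromNum G) (hchi' : chromNum G ≤ 3)
    (T' : SimpleGraph V) (hle : T' ≤ G) (hT : T'.IsTree) :
    chromNum G + 1 ≤ BBC G T' 2 := by
  haveI : Nonempty V := hG.nonempty
  have hcard2 : 1 < Fintype.card V := by
    by_contra h
    push_neg at h
    have hone : IsProperColoring G 1 (fun _ => 1) := by
      refine ⟨fun v => ⟨le_refl _, le_refl _⟩, ?_⟩
      intro u v huv heq
      exact huv.ne (Fintype.card_le_one_iff.mp h u v)
    have : chromNum G ≤ 1 := Nat.sInf_le ⟨_, hone⟩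
    omega
  have hedge : ∀ x : V, ∃ y, T'.Adj x y := by
    intro x
    obtain ⟨y, hy⟩ := Fintype.exists_ne_of_one_lt_card hcard2 x
    obtain ⟨p⟩ := hT.1.preconnected x y
    cases p with
    | nil => exact absurd rfl hy
    | cons h _ => exact ⟨_, h⟩
  refine le_csInf ⟨2 * Fintype.card V, exists_backbone_coloring G T'⟩ ?_
  intro k hk
  obtain ⟨c, ⟨hb, hp⟩, hback⟩ := hk
  have hχ : chromNum G ≤ k := Nat.sInf_le ⟨c, hb, hp⟩
  by_contra hcon
  push_neg at hcon
  have hk3 : k = chromNum G := by omega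
  rcases (by omega : chromNum G = 2 ∨ chromNum G = 3) with h2 | h2
  · obtain ⟨b', hab⟩ := hedge (Classical.arbitrary V)
    have habs := hback hab
    have h1 := hb (Classical.arbitrary V)
    have h1' := hb b'
    rw [hk3, h2] at h1 h1'
    rcases le_abs.mp habs with h | h <;> push_cast at h <;> omega
  · have hno2 : ∀ x, c x ≠ 2 := by
      intro x hx2
      obtain ⟨y, hy⟩ := hedge x
      have hb' := hback hy
      have h1 := hb y
      rw [hk3, h2] at h1
      rcases le_abs.mp hb' with h | h <;> rw [hx2] at h <;> push_cast at h <;> omega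
    have hd : IsProperColoring G 2 (fun x => if c x = 1 then 1 else 2) := by
      constructor
      · intro x
        by_cases h1 : c x = 1 <;> simp [h1]
      · intro u w huw hdeq
        have hcu := hb u
        have hcw := hb w
        rw [hk3, h2] at hcu hcw
        have hne' := hp huw
        have h2u := hno2 u
        have h2w := hno2 w
        by_cases h1 : c u = 1 <;> by_cases h1' : c w = 1 <;>
          simp [h1, h1'] at hdeq <;> omega
    have : chromNum G ≤ 2 := Nat.sInf_le ⟨_, hd⟩
    omega

end Main

/-- Every connected graph `G` with `2 ≤ χ(G) ≤ 3` has a spanning tree `T` with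
`BBC_2(G,T) = χ(G) + 1`, and every spanning tree `T'` of `G` satisfies
`BBC_2(G,T') ≥ χ(G) + 1`. -/
theorem stmt_8 {V : Type*} [Fintype V] (G : SimpleGraph V) (hG : G.Connected)
    (hchi : 2 ≤ chromNum G) (hchi' : chromNum G ≤ 3) :
    (∃ T : SimpleGraph V, T ≤ G ∧ T.IsTree ∧ BBC G T 2 = chromNum G + 1) ∧
    (∀ T' : SimpleGraph V, T' ≤ G → T'.IsTree →
      chromNum G + 1 ≤ BBC G T' 2) := by
  classical
  haveI : Nonempty V := hG.nonempty
  have hlower := bbc_lower G hG hchi hchi'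
  refine ⟨?_, hlower⟩
  have hmem : chromNum G ∈ {k : ℕ | ∃ c : V → ℕ, IsProperColoring G k c} :=
    Nat.sInf_mem ⟨Fintype.card V, exists_proper_card G⟩
  obtain ⟨f, hfb, hfp⟩ := hmem
  rcases (by omega : chromNum G = 2 ∨ chromNum G = 3) with h2 | h3
  · -- χ(G) = 2
    obtain ⟨T, hTle, hTtree⟩ := exists_spanning_tree G hG
    refine ⟨T, hTle, hTtree, le_antisymm ?_ (hlower T hTle hTtree)⟩
    rw [h2]
    apply Nat.sInf_le
    refine ⟨fun x => if f x = 1 then 1 else 3, ⟨?_, ?_⟩, ?_⟩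
    · intro v
      by_cases h1 : f v = 1 <;> simp [h1]
    · intro u v huv heq
      have hfu := hfb u
      have hfv := hfb v
      rw [h2] at hfu hfv
      have := hfp huv
      by_cases h1 : f u = 1 <;> by_cases h1' : f v = 1 <;>
        simp [h1, h1'] at heq <;> omega
    · intro u v huv
      have hG' : G.Adj u v := hTle huv
      have hfu := hfb u
      have hfv := hfb v
      rw [h2] at hfu hfv
      have := hfp hG'
      rw [le_abs]
      by_cases h1 : f u = 1 <;> by_cases h1' : f v = 1 <;>
        simp [h1, h1'] <;> omega
  · -- χ(G) = 3
    obtain ⟨c, hc1, _, hc3, hc4⟩ :=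
      keyLemma G (Set.univ : Set V).ncard Set.univ f (le_refl _)
        ⟨Classical.arbitrary V, Set.mem_univ _⟩
        (by
          intro x _ y _
          refine (hG.preconnected x y).mono ?_
          intro a b hab
          exact ⟨hab, Set.mem_univ _, Set.mem_univ _⟩)
        (by
          intro x _
          have := hfb x
          rw [h3] at this
          omega)
        (fun x y hxy => hfp hxy.1)
    have hgoodconn : (goodG G c).Connected := by
      refine ⟨?_⟩
      intro x y
      refine (hc4 x (Set.mem_univ _) y (Set.mem_univ _)).mono ?_
      intro a b hab
      exact hab.1
    obtain ⟨T, hTle, hTtree⟩ := exists_spanning_tree (goodG G c) hgoodconn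
    refine ⟨T, le_trans hTle (goodG_le G c), hTtree,
      le_antisymm ?_ (hlower T (le_trans hTle (goodG_le G c)) hTtree)⟩
    rw [h3]
    apply Nat.sInf_le
    refine ⟨c, ⟨?_, ?_⟩, ?_⟩
    · intro v
      have := hc1 v (Set.mem_univ _)
      omega
    · intro u v huv
      exact hc3 u v ⟨huv, Set.mem_univ _, Set.mem_univ _⟩
    · intro u v huv
      exact (hTle huv).2
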